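/- arXiv:1810.02177 — 2 statements merged into one kernel-verified Lean document; each statement's English description precedes it below -/
import Mathlib

section
/- Let $H \in (0, 1/2)$ and for $T \in (0, \infty]$ define $L_1(T) := \int_{[0,T]^2} e^{-u-x} \Big( \int_x^{x+u} t^{2H-1} (x+u-t)^{2H-1} \, dt \Big) dx \, du$. Then $L_1(\infty) < \infty$ and there exists a constant $c > 0$ such that for all $T \geq 1$, $0 \leq L_1(\infty) - L_1(T) \leq c \, T e^{-T}$. -/
open MeasureTheory Real Filter

section Aux
open Set Topology

private lemma inner_est (H x u : ℝ) (hH : H ∈ Set.Ioo (0:ℝ) (1/2)) (hx : 0 < x) (hu : 0 < u) :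
    IntervalIntegrable (fun t => t ^ (2*H-1) * (x+u-t) ^ (2*H-1)) volume x (x+u) ∧
    0 ≤ (∫ t in x..(x+u), t ^ (2*H-1) * (x+u-t) ^ (2*H-1)) ∧
    (∫ t in x..(x+u), t ^ (2*H-1) * (x+u-t) ^ (2*H-1)) ≤ x ^ (2*H-1) * (u ^ (2*H) / (2*H)) := by
  obtain ⟨hH0, hH1⟩ := hH
  have hc1 : (-1:ℝ) < 2*H-1 := by linarith
  have hc2 : 2*H-1 ≤ 0 := by linarith
  have hxb : x ≤ x + u := by linarith
  have hcomp : IntervalIntegrable (fun t : ℝ => (x+u-t) ^ (2*H-1)) volume x (x+u) := by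
    have h0 : IntervalIntegrable (fun s : ℝ => s ^ (2*H-1)) volume 0 u :=
      intervalIntegral.intervalIntegrable_rpow' hc1
    have := h0.comp_sub_left (x+u)
    simpa using this.symm
  have hmaj : IntervalIntegrable (fun t => x ^ (2*H-1) * (x+u-t) ^ (2*H-1)) volume x (x+u) :=
    hcomp.const_mul _
  have hpt : ∀ t ∈ Icc x (x+u), t ^ (2*H-1) * (x+u-t) ^ (2*H-1)
      ≤ x ^ (2*H-1) * (x+u-t) ^ (2*H-1) := by
    intro t ht
    have h1 : t ^ (2*H-1) ≤ x ^ (2*H-1) := Real.rpow_le_rpow_of_nonpos hx ht.1 hc2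
    have h2 : (0:ℝ) ≤ (x+u-t) ^ (2*H-1) := Real.rpow_nonneg (by linarith [ht.2]) _
    exact mul_le_mul_of_nonneg_right h1 h2
  have hint : IntervalIntegrable (fun t => t ^ (2*H-1) * (x+u-t) ^ (2*H-1)) volume x (x+u) := by
    apply hmaj.mono_fun'
    · apply Measurable.aestronglyMeasurable
      fun_prop
    · rw [Filter.EventuallyLE, ae_restrict_iff' measurableSet_uIoc]
      apply ae_of_all
      intro t ht
      rw [uIoc_of_le hxb] at ht
      have ht1 : x ≤ t := le_of_lt ht.1
      have h0t : (0:ℝ) ≤ t := le_trans hx.le ht1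
      have h0s : (0:ℝ) ≤ x + u - t := by linarith [ht.2]
      rw [Real.norm_of_nonneg (mul_nonneg (Real.rpow_nonneg h0t _) (Real.rpow_nonneg h0s _))]
      exact hpt t ⟨ht1, ht.2⟩
  refine ⟨hint, ?_, ?_⟩
  · apply intervalIntegral.integral_nonneg hxb
    intro t ht
    exact mul_nonneg (Real.rpow_nonneg (le_trans hx.le ht.1) _)
      (Real.rpow_nonneg (by linarith [ht.2]) _)
  · have hmono := intervalIntegral.integral_mono_on hxb hint hmaj hpt
    refine hmono.trans_eq ?_
    rw [intervalIntegral.integral_const_mul]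
    congr 1
    have h1 : (∫ t in x..(x+u), (x+u-t) ^ (2*H-1)) = ∫ s in (0:ℝ)..u, s ^ (2*H-1) := by
      have := intervalIntegral.integral_comp_sub_left (fun s : ℝ => s ^ (2*H-1)) (x+u)
        (a := x) (b := x+u)
      simpa using this
    rw [h1, integral_rpow (Or.inl hc1)]
    have h2H : 2*H - 1 + 1 = 2*H := by ring
    rw [h2H, Real.zero_rpow (by linarith : 2*H ≠ 0)]
    ring

private lemma exp_int (T : ℝ) : IntegrableOn (fun x : ℝ => Real.exp (-x)) (Ioi T) := by
  have := exp_neg_integrableOn_Ioi T (one_pos (α := ℝ))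
  simpa using this

private lemma gamma_int (s : ℝ) (hs : 0 < s) (T : ℝ) (hT : 0 ≤ T) :
    IntegrableOn (fun x : ℝ => Real.exp (-x) * x ^ (s - 1)) (Ioi T) :=
  (Real.GammaIntegral_convergent hs).mono_set (Ioi_subset_Ioi hT)

private lemma tail_x (T c : ℝ) (hT : 1 ≤ T) (hc1 : -1 < c) (hc2 : c ≤ 0) :
    ∫ x in Ioi T, Real.exp (-x) * x ^ c ≤ Real.exp (-T) := by
  have hint : IntegrableOn (fun x : ℝ => Real.exp (-x) * x ^ c) (Ioi T) := by
    have := gamma_int (c+1) (by linarith) T (by linarith)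
    simpa using this
  have h := setIntegral_mono_on hint (exp_int T) measurableSet_Ioi (fun x hx => ?_)
  · rw [integral_exp_neg_Ioi] at h; exact h
  · have hx1 : (1:ℝ) ≤ x := le_trans hT (le_of_lt hx)
    have : x ^ c ≤ 1 := Real.rpow_le_one_of_one_le_of_nonpos hx1 hc2
    nlinarith [Real.exp_pos (-x)]

private lemma int_exp_mul_id (T : ℝ) (hT : 1 ≤ T) :
    ∫ u in Ioi T, Real.exp (-u) * u = (T + 1) * Real.exp (-T) := by
  have hd : ∀ y : ℝ, HasDerivAt (fun y : ℝ => -((y+1) * Real.exp (-y))) (Real.exp (-y) * y) y := by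
    intro y
    have h1 : HasDerivAt (fun y : ℝ => Real.exp (-y)) (-Real.exp (-y)) y := by
      simpa using (hasDerivAt_neg y).exp
    have h2 : HasDerivAt (fun y : ℝ => (y+1) * Real.exp (-y))
        (1 * Real.exp (-y) + (y+1) * (-Real.exp (-y))) y :=
      ((hasDerivAt_id y).add_const 1).mul h1
    have h3 := h2.neg
    exact h3.congr_deriv (by ring)
  have hint : IntegrableOn (fun u : ℝ => Real.exp (-u) * u) (Ioi T) := by
    have := gamma_int 2 two_pos T (by linarith)
    norm_num at this
    simpa [Real.rpow_one] using this
  have htend : Tendsto (fun y : ℝ => -((y+1) * Real.exp (-y))) atTop (𝓝 0) := by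
    have ha := tendsto_pow_mul_exp_neg_atTop_nhds_zero 1
    have hb := Real.tendsto_exp_neg_atTop_nhds_zero
    have hc := ha.add hb
    rw [add_zero] at hc
    have hc' : Tendsto (fun y : ℝ => (y+1) * Real.exp (-y)) atTop (𝓝 0) := by
      refine hc.congr fun y => ?_
      simp [pow_one]; ring
    simpa using hc'.neg
  have := integral_Ioi_of_hasDerivAt_of_tendsto
    ((hd T).continuousAt.continuousWithinAt) (fun y _ => hd y) hint htend
  rw [this]; ring

private lemma tail_u (T e : ℝ) (hT : 1 ≤ T) (he0 : 0 < e) (he1 : e ≤ 1) :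
    ∫ u in Ioi T, Real.exp (-u) * u ^ e ≤ 2 * T * Real.exp (-T) := by
  have hint : IntegrableOn (fun u : ℝ => Real.exp (-u) * u ^ e) (Ioi T) := by
    have := gamma_int (e+1) (by linarith) T (by linarith)
    simpa using this
  have hint2 : IntegrableOn (fun u : ℝ => Real.exp (-u) * u) (Ioi T) := by
    have := gamma_int 2 two_pos T (by linarith)
    norm_num at this
    simpa [Real.rpow_one] using this
  have h := setIntegral_mono_on hint hint2 measurableSet_Ioi (fun u hu => ?_)
  · rw [int_exp_mul_id T hT] at h
    nlinarith [Real.exp_pos (-T)]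
  · have hu1 : (1:ℝ) ≤ u := le_trans hT (le_of_lt hu)
    have : u ^ e ≤ u ^ (1:ℝ) := Real.rpow_le_rpow_of_exponent_le hu1 he1
    rw [Real.rpow_one] at this
    nlinarith [Real.exp_pos (-u)]

end Aux

theorem stmt_15 (H : ℝ) (hH : H ∈ Set.Ioo (0:ℝ) (1/2))
    (L1 : ℝ → ℝ) (L1inf : ℝ)
    (hL1 : ∀ T : ℝ, L1 T = ∫ x in (0:ℝ)..T, ∫ u in (0:ℝ)..T,
      Real.exp (-u - x) * ∫ t in x..(x + u), t ^ (2 * H - 1) * (x + u - t) ^ (2 * H - 1))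
    (hL1inf : L1inf = ∫ p in Set.Ioi (0:ℝ) ×ˢ Set.Ioi (0:ℝ),
      Real.exp (-p.2 - p.1) * ∫ t in p.1..(p.1 + p.2),
        t ^ (2 * H - 1) * (p.1 + p.2 - t) ^ (2 * H - 1)) :
    MeasureTheory.IntegrableOn (fun p : ℝ × ℝ =>
        Real.exp (-p.2 - p.1) * ∫ t in p.1..(p.1 + p.2),
          t ^ (2 * H - 1) * (p.1 + p.2 - t) ^ (2 * H - 1))
        (Set.Ioi (0:ℝ) ×ˢ Set.Ioi (0:ℝ)) ∧
    ∃ c : ℝ, 0 < c ∧ ∀ T : ℝ, 1 ≤ T →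
      0 ≤ L1inf - L1 T ∧ L1inf - L1 T ≤ c * T * Real.exp (-T) := by
  obtain ⟨hH0, hH1⟩ := hH
  have h2H : (0:ℝ) < 2 * H := by linarith
  set F : ℝ × ℝ → ℝ := fun p => Real.exp (-p.2 - p.1) *
    ∫ t in p.1..(p.1 + p.2), t ^ (2 * H - 1) * (p.1 + p.2 - t) ^ (2 * H - 1) with hF
  set A : Set (ℝ × ℝ) := Set.Ioi (0:ℝ) ×ˢ Set.Ioi (0:ℝ) with hAdef
  have hA : MeasurableSet A := measurableSet_Ioi.prod measurableSet_Ioi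
  have hvol : (volume : Measure (ℝ × ℝ)) = (volume : Measure ℝ).prod volume :=
    Measure.volume_eq_prod ℝ ℝ
  -- measurable version of F
  set G : ℝ × ℝ → ℝ := fun p => Real.exp (-p.2 - p.1) *
      ∫ t, (Set.Ioc p.1 (p.1 + p.2)).indicator
        (fun t => t ^ (2 * H - 1) * (p.1 + p.2 - t) ^ (2 * H - 1)) t with hG
  have hGmeas : Measurable G := by
    apply Measurable.mul
    · fun_prop
    · have hk : Measurable (fun q : (ℝ × ℝ) × ℝ =>
          if q.2 ∈ Set.Ioc q.1.1 (q.1.1 + q.1.2)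
          then q.2 ^ (2 * H - 1) * (q.1.1 + q.1.2 - q.2) ^ (2 * H - 1) else 0) := by
        apply Measurable.ite
        · exact (measurableSet_lt (measurable_fst.fst) measurable_snd).inter
            (measurableSet_le measurable_snd (measurable_fst.fst.add measurable_fst.snd))
        · fun_prop
        · exact measurable_const
      have h2 : (fun p : ℝ × ℝ => ∫ t, (Set.Ioc p.1 (p.1 + p.2)).indicator
          (fun t => t ^ (2 * H - 1) * (p.1 + p.2 - t) ^ (2 * H - 1)) t)
          = fun p : ℝ × ℝ => ∫ t, (fun q : (ℝ × ℝ) × ℝ =>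
            if q.2 ∈ Set.Ioc q.1.1 (q.1.1 + q.1.2)
            then q.2 ^ (2 * H - 1) * (q.1.1 + q.1.2 - q.2) ^ (2 * H - 1) else 0) (p, t) := by
        funext p; congr 1; funext t; simp [Set.indicator_apply]
      rw [h2]
      exact (hk.stronglyMeasurable.integral_prod_right').measurable
  have hFG : ∀ p ∈ A, F p = G p := by
    intro p hp
    obtain ⟨hp1, hp2⟩ := hp
    simp only [Set.mem_Ioi] at hp1 hp2
    rw [hF, hG]
    simp only
    rw [intervalIntegral.integral_of_le (by linarith : p.1 ≤ p.1 + p.2),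
      ← integral_indicator measurableSet_Ioc]
  have hFaesm : AEStronglyMeasurable F (volume.restrict A) :=
    hGmeas.aestronglyMeasurable.congr
      ((ae_restrict_mem hA).mono fun p hp => (hFG p hp).symm)
  -- the dominating function
  set g : ℝ × ℝ → ℝ := fun p => (Real.exp (-p.1) * p.1 ^ (2 * H - 1)) *
      (Real.exp (-p.2) * p.2 ^ (2 * H) / (2 * H)) with hg
  have h1int : IntegrableOn (fun x : ℝ => Real.exp (-x) * x ^ (2 * H - 1)) (Set.Ioi 0) :=
    Real.GammaIntegral_convergent h2H
  have h2int : IntegrableOn (fun u : ℝ => Real.exp (-u) * u ^ (2 * H) / (2 * H)) (Set.Ioi 0) := by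
    have := Real.GammaIntegral_convergent (show (0:ℝ) < 2 * H + 1 by linarith)
    simp only [add_sub_cancel_right] at this
    exact this.div_const (2 * H)
  have hgA : IntegrableOn g A := by
    rw [hAdef, IntegrableOn, hvol, ← Measure.prod_restrict]
    exact MeasureTheory.Integrable.mul_prod h1int h2int
  have hFle : ∀ p ∈ A, ‖F p‖ ≤ g p := by
    intro p hp
    obtain ⟨hp1, hp2⟩ := hp
    simp only [Set.mem_Ioi] at hp1 hp2
    obtain ⟨-, hI0, hIle⟩ := inner_est H p.1 p.2 ⟨hH0, hH1⟩ hp1 hp2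
    have hexp : Real.exp (-p.2 - p.1) = Real.exp (-p.1) * Real.exp (-p.2) := by
      rw [← Real.exp_add]; ring_nf
    have hF0 : 0 ≤ F p := mul_nonneg (Real.exp_pos _).le hI0
    rw [Real.norm_of_nonneg hF0]
    calc F p ≤ Real.exp (-p.2 - p.1) * (p.1 ^ (2 * H - 1) * (p.2 ^ (2 * H) / (2 * H))) :=
          mul_le_mul_of_nonneg_left hIle (Real.exp_pos _).le
      _ = g p := by rw [hg]; simp only; rw [hexp]; ring
  have hFA : IntegrableOn F A :=
    hgA.mono' hFaesm ((ae_restrict_mem hA).mono hFle)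
  refine ⟨hFA, ?_⟩
  -- constants
  set K1 : ℝ := ∫ x in Set.Ioi (0:ℝ), Real.exp (-x) * x ^ (2 * H - 1) with hK1def
  set K2 : ℝ := ∫ u in Set.Ioi (0:ℝ), Real.exp (-u) * u ^ (2 * H) with hK2def
  have hK1 : 0 ≤ K1 := setIntegral_nonneg measurableSet_Ioi fun x hx =>
    mul_nonneg (Real.exp_pos _).le (Real.rpow_nonneg (le_of_lt hx) _)
  have hK2 : 0 ≤ K2 := setIntegral_nonneg measurableSet_Ioi fun x hx =>
    mul_nonneg (Real.exp_pos _).le (Real.rpow_nonneg (le_of_lt hx) _)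
  have ha : 0 ≤ K2 / (2 * H) := div_nonneg hK2 h2H.le
  have hb : 0 ≤ K1 / (2 * H) := div_nonneg hK1 h2H.le
  refine ⟨(K2 + 2 * K1) / (2 * H) + 1, by positivity, fun T hT => ?_⟩
  have hT0 : (0:ℝ) ≤ T := by linarith
  set B : Set (ℝ × ℝ) := Set.Ioc (0:ℝ) T ×ˢ Set.Ioc (0:ℝ) T with hBdef
  have hB : MeasurableSet B := measurableSet_Ioc.prod measurableSet_Ioc
  have hBA : B ⊆ A := Set.prod_mono Set.Ioc_subset_Ioi_self Set.Ioc_subset_Ioi_self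
  have hFB : IntegrableOn F B := hFA.mono_set hBA
  have hLT : L1 T = ∫ p in B, F p := by
    have hFB' : IntegrableOn F (Set.Ioc (0:ℝ) T ×ˢ Set.Ioc (0:ℝ) T)
        ((volume : Measure ℝ).prod volume) := by rwa [← hvol]
    rw [hL1 T]
    simp only [intervalIntegral.integral_of_le hT0]
    rw [hBdef, hvol, MeasureTheory.setIntegral_prod F hFB']
  have hDiff : L1inf - L1 T = ∫ p in A \ B, F p := by
    rw [hL1inf, hLT]
    exact (integral_diff hB hFA hBA).symm
  have hFnn : ∀ p ∈ A, 0 ≤ F p := by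
    intro p hp
    obtain ⟨hp1, hp2⟩ := hp
    simp only [Set.mem_Ioi] at hp1 hp2
    exact mul_nonneg (Real.exp_pos _).le (inner_est H p.1 p.2 ⟨hH0, hH1⟩ hp1 hp2).2.1
  constructor
  · rw [hDiff]
    exact setIntegral_nonneg (hA.diff hB) fun p hp => hFnn p hp.1
  -- upper bound
  set S1 : Set (ℝ × ℝ) := Set.Ioi T ×ˢ Set.Ioi (0:ℝ) with hS1def
  set S2 : Set (ℝ × ℝ) := Set.Ioi (0:ℝ) ×ˢ Set.Ioi T with hS2def
  have hS1m : MeasurableSet S1 := measurableSet_Ioi.prod measurableSet_Ioi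
  have hS2m : MeasurableSet S2 := measurableSet_Ioi.prod measurableSet_Ioi
  have hS1A : S1 ⊆ A := Set.prod_mono (Set.Ioi_subset_Ioi hT0) subset_rfl
  have hS2A : S2 ⊆ A := Set.prod_mono subset_rfl (Set.Ioi_subset_Ioi hT0)
  have hgS1 : IntegrableOn g S1 := hgA.mono_set hS1A
  have hgS2 : IntegrableOn g S2 := hgA.mono_set hS2A
  have hgnn : ∀ p ∈ A, 0 ≤ g p := by
    intro p hp
    obtain ⟨hp1, hp2⟩ := hp
    simp only [Set.mem_Ioi] at hp1 hp2
    rw [hg]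
    have := Real.rpow_nonneg hp1.le (2 * H - 1)
    have := Real.rpow_nonneg hp2.le (2 * H)
    positivity
  have hsub : A \ B ⊆ S1 ∪ S2 := by
    rintro p ⟨hpA, hpB⟩
    obtain ⟨h1, h2⟩ := hpA
    simp only [Set.mem_Ioi] at h1 h2
    by_cases hx : p.1 ≤ T
    · right; exact ⟨Set.mem_Ioi.mpr h1, Set.mem_Ioi.mpr
        (lt_of_not_ge fun hu => hpB ⟨⟨h1, hx⟩, ⟨h2, hu⟩⟩)⟩
    · left; exact ⟨Set.mem_Ioi.mpr (lt_of_not_ge hx), Set.mem_Ioi.mpr h2⟩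
  have step1 : ∫ p in A \ B, F p ≤ ∫ p in A \ B, g p :=
    setIntegral_mono_on (hFA.mono_set Set.diff_subset) (hgA.mono_set Set.diff_subset)
      (hA.diff hB) fun p hp => (Real.le_norm_self _).trans (hFle p hp.1)
  have step2 : ∫ p in A \ B, g p ≤ ∫ p in S1 ∪ S2, g p := by
    apply setIntegral_mono_set (hgS1.union hgS2)
    · exact (ae_restrict_mem (hS1m.union hS2m)).mono fun p hp =>
        hgnn p (hp.elim (fun h => hS1A h) (fun h => hS2A h))
    · exact HasSubset.Subset.eventuallyLE hsub
  have step3 : ∫ p in S1 ∪ S2, g p ≤ (∫ p in S1, g p) + ∫ p in S2, g p := by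
    rw [← Set.union_diff_self, setIntegral_union Set.disjoint_sdiff_right (hS2m.diff hS1m)
      hgS1 (hgS2.mono_set Set.diff_subset)]
    have : ∫ p in S2 \ S1, g p ≤ ∫ p in S2, g p := by
      apply setIntegral_mono_set hgS2
      · exact (ae_restrict_mem hS2m).mono fun p hp => hgnn p (hS2A hp)
      · exact HasSubset.Subset.eventuallyLE Set.diff_subset
    linarith
  have hS1val : ∫ p in S1, g p ≤ Real.exp (-T) * (K2 / (2 * H)) := by
    have heq : ∫ p in S1, g p = (∫ x in Set.Ioi T, Real.exp (-x) * x ^ (2 * H - 1)) *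
        ∫ u in Set.Ioi (0:ℝ), Real.exp (-u) * u ^ (2 * H) / (2 * H) := by
      rw [hS1def, hvol]
      have := MeasureTheory.setIntegral_prod_mul (μ := volume) (ν := volume)
        (fun x : ℝ => Real.exp (-x) * x ^ (2 * H - 1))
        (fun u : ℝ => Real.exp (-u) * u ^ (2 * H) / (2 * H)) (Set.Ioi T) (Set.Ioi (0:ℝ))
      simpa [hg] using this
    rw [heq]
    have h2 : (∫ u in Set.Ioi (0:ℝ), Real.exp (-u) * u ^ (2 * H) / (2 * H)) = K2 / (2 * H) := by
      rw [hK2def]; exact integral_div _ _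
    rw [h2]
    exact mul_le_mul_of_nonneg_right (tail_x T (2 * H - 1) hT (by linarith) (by linarith)) ha
  have hS2val : ∫ p in S2, g p ≤ K1 * (2 * T * Real.exp (-T) / (2 * H)) := by
    have heq : ∫ p in S2, g p = K1 *
        ∫ u in Set.Ioi T, Real.exp (-u) * u ^ (2 * H) / (2 * H) := by
      rw [hS2def, hvol, hK1def]
      have := MeasureTheory.setIntegral_prod_mul (μ := volume) (ν := volume)
        (fun x : ℝ => Real.exp (-x) * x ^ (2 * H - 1))
        (fun u : ℝ => Real.exp (-u) * u ^ (2 * H) / (2 * H)) (Set.Ioi (0:ℝ)) (Set.Ioi T)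
      simpa [hg] using this
    rw [heq]
    apply mul_le_mul_of_nonneg_left _ hK1
    rw [integral_div]
    gcongr
    exact tail_u T (2 * H) hT h2H (by linarith)
  have key : Real.exp (-T) ≤ T * Real.exp (-T) := by
    nlinarith [Real.exp_pos (-T)]
  have hTe : 0 < T * Real.exp (-T) := by positivity
  have hfin : Real.exp (-T) * (K2 / (2 * H)) + K1 * (2 * T * Real.exp (-T) / (2 * H))
      ≤ ((K2 + 2 * K1) / (2 * H) + 1) * T * Real.exp (-T) := by
    have e1 : K1 * (2 * T * Real.exp (-T) / (2 * H)) = (K1 / (2 * H)) * (2 * T * Real.exp (-T)) := by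
      ring
    have e2 : ((K2 + 2 * K1) / (2 * H) + 1) = K2 / (2 * H) + 2 * (K1 / (2 * H)) + 1 := by
      ring
    have h3 := mul_le_mul_of_nonneg_right key ha
    nlinarith [mul_nonneg hb hTe.le]
  rw [hDiff]
  linarith [step1, step2, step3, hS1val, hS2val]
end

section
/- Let $H \in (0, 1/2)$ and for $T > 0$ define $K_1(T) := \iiint_{\{0 < u < x < t \leq x+u, \; t > T\}} e^{-u-x} (t-x)^{2H-1} (t-u)^{2H-1} \, dt \, dx \, du$. Then there exists a constant $c > 0$ such that for all $T \geq 1$, $K_1(T) \leq c \, T^{4H} e^{-T}$. -/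
open MeasureTheory Real Filter Topology


lemma aux_inner {p : ℝ} (hp : -1 < p) {t : ℝ} (ht : 0 < t) :
    ∫⁻ x in Set.Ioo 0 t, ENNReal.ofReal ((t - x) ^ p) = ENNReal.ofReal (t ^ (p + 1) / (p + 1)) := by
  have hii : IntervalIntegrable (fun x => (t - x) ^ p) volume 0 t := by
    have h := ((intervalIntegral.intervalIntegrable_rpow' hp (a := 0) (b := t)).comp_sub_left t).symm
    simpa using h
  have hint : IntegrableOn (fun x => (t - x) ^ p) (Set.Ioc 0 t) := by
    rwa [intervalIntegrable_iff_integrableOn_Ioc_of_le ht.le] at hii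
  have heq : (volume.restrict (Set.Ioo (0:ℝ) t)) = volume.restrict (Set.Ioc 0 t) :=
    Measure.restrict_congr_set MeasureTheory.Ioo_ae_eq_Ioc
  calc (∫⁻ x in Set.Ioo 0 t, ENNReal.ofReal ((t - x) ^ p))
      = ∫⁻ x in Set.Ioc 0 t, ENNReal.ofReal ((t - x) ^ p) := by rw [heq]
    _ = ENNReal.ofReal (∫ x in Set.Ioc 0 t, (t - x) ^ p) := by
        rw [← ofReal_integral_eq_lintegral_ofReal hint ?_]
        filter_upwards [ae_restrict_mem measurableSet_Ioc] with x hx using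
          Real.rpow_nonneg (by linarith [hx.2]) _
    _ = ENNReal.ofReal (t ^ (p + 1) / (p + 1)) := by
        congr 1
        rw [← intervalIntegral.integral_of_le ht.le,
          intervalIntegral.integral_comp_sub_left (fun x => x ^ p) t]
        simp only [sub_self, sub_zero]
        rw [integral_rpow (Or.inl hp)]
        rw [Real.zero_rpow (by linarith : p + 1 ≠ 0)]
        ring


lemma aux_outer (T : ℝ) :
    ∫⁻ t in Set.Ioi T, ENNReal.ofReal ((1 + (t - T)) ^ 2 * Real.exp (-t))
      = ENNReal.ofReal (5 * Real.exp (-T)) := by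
  set G : ℝ → ℝ := fun t =>
    -(((1 + (t - T)) ^ 2 + 2 * (1 + (t - T)) + 2) * Real.exp (-t)) with hG
  have hderiv : ∀ t ∈ Set.Ici T, HasDerivAt G ((1 + (t - T)) ^ 2 * Real.exp (-t)) t := by
    intro t _
    have h1 : HasDerivAt (fun s : ℝ => 1 + (s - T)) 1 t := by
      simpa using ((hasDerivAt_id t).sub_const T).const_add 1
    have hq : HasDerivAt (fun s => (1 + (s - T)) ^ 2 + 2 * (1 + (s - T)) + 2)
        (2 * (1 + (t - T)) + 2) t := by
      have := ((h1.pow 2).add (h1.const_mul 2)).add_const 2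
      exact this.congr_deriv (by ring)
    have hexp : HasDerivAt (fun s : ℝ => Real.exp (-s)) (-Real.exp (-t)) t := by
      have := ((hasDerivAt_id t).neg).exp
      exact this.congr_deriv (by simp)
    have := (hq.mul hexp).neg
    exact this.congr_deriv (by ring)
  have hpos : ∀ t ∈ Set.Ioi T, 0 ≤ (1 + (t - T)) ^ 2 * Real.exp (-t) := fun t _ =>
    mul_nonneg (sq_nonneg _) (Real.exp_pos _).le
  have htend : Tendsto G atTop (𝓝 0) := by
    have h2 := Real.tendsto_pow_mul_exp_neg_atTop_nhds_zero 2
    have h1 := Real.tendsto_pow_mul_exp_neg_atTop_nhds_zero 1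
    have h0 := Real.tendsto_exp_neg_atTop_nhds_zero
    have hcomb : Tendsto (fun t : ℝ =>
        -(t ^ 2 * Real.exp (-t)) + (2 * T - 4) * (t ^ 1 * Real.exp (-t))
          + (-((1 - T) ^ 2 + 4 - 2 * T)) * Real.exp (-t)) atTop
        (𝓝 (-0 + (2 * T - 4) * 0 + (-((1 - T) ^ 2 + 4 - 2 * T)) * 0)) :=
      ((h2.neg).add (h1.const_mul _)).add (h0.const_mul _)
    simp only [neg_zero, mul_zero, add_zero, zero_add] at hcomb
    refine hcomb.congr fun t => ?_
    simp only [hG, pow_one]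
    ring
  have hintder := integrableOn_Ioi_deriv_of_nonneg' hderiv hpos htend
  have hval := integral_Ioi_of_hasDerivAt_of_nonneg' hderiv hpos htend
  rw [← ofReal_integral_eq_lintegral_ofReal hintder ?_]
  · rw [hval]
    congr 1
    simp only [hG, sub_self]
    ring
  · filter_upwards [ae_restrict_mem measurableSet_Ioi] with t ht using hpos t ht

lemma aux_main {H : ℝ} (hH0 : 0 < H) (hH2 : H < 1/2) {T : ℝ} (hT : 1 ≤ T) :
    ∫⁻ q : ℝ × ℝ × ℝ in {q : ℝ × ℝ × ℝ | 0 < q.2.2 ∧ q.2.2 < q.2.1 ∧ q.2.1 < q.1 ∧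
        q.1 ≤ q.2.1 + q.2.2 ∧ T < q.1},
      ENNReal.ofReal ‖Real.exp (-q.2.2 - q.2.1) * (q.1 - q.2.1) ^ (2 * H - 1) *
        (q.1 - q.2.2) ^ (2 * H - 1)‖
      ≤ ENNReal.ofReal (5 / (4 * H ^ 2) * T ^ (4 * H) * Real.exp (-T)) := by
  have hp1 : -1 < 2 * H - 1 := by linarith
  set S : Set (ℝ × ℝ × ℝ) := {q : ℝ × ℝ × ℝ | 0 < q.2.2 ∧ q.2.2 < q.2.1 ∧ q.2.1 < q.1 ∧
      q.1 ≤ q.2.1 + q.2.2 ∧ T < q.1} with hSdef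
  have hS : MeasurableSet S := by
    apply MeasurableSet.inter (measurableSet_lt measurable_const measurable_snd.snd)
    apply MeasurableSet.inter (measurableSet_lt measurable_snd.snd measurable_snd.fst)
    apply MeasurableSet.inter (measurableSet_lt measurable_snd.fst measurable_fst)
    exact MeasurableSet.inter
      (measurableSet_le measurable_fst (measurable_snd.fst.add measurable_snd.snd))
      (measurableSet_lt measurable_const measurable_fst)
  set c1 : ℝ × ℝ × ℝ → ENNReal := Set.indicator {q : ℝ × ℝ × ℝ | T < q.1}
    (fun q => ENNReal.ofReal (Real.exp (-q.1))) with hc1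
  set c2 : ℝ × ℝ × ℝ → ENNReal := Set.indicator {q : ℝ × ℝ × ℝ | 0 < q.2.1 ∧ q.2.1 < q.1}
    (fun q => ENNReal.ofReal ((q.1 - q.2.1) ^ (2 * H - 1))) with hc2
  set c3 : ℝ × ℝ × ℝ → ENNReal := Set.indicator {q : ℝ × ℝ × ℝ | 0 < q.2.2 ∧ q.2.2 < q.1}
    (fun q => ENNReal.ofReal ((q.1 - q.2.2) ^ (2 * H - 1))) with hc3
  have hm : Measurable fun q => c1 q * c2 q * c3 q := by
    apply Measurable.mul
    apply Measurable.mul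
    · exact Measurable.indicator (by fun_prop)
        (measurableSet_lt measurable_const measurable_fst)
    · exact Measurable.indicator (by fun_prop)
        ((measurableSet_lt measurable_const measurable_snd.fst).inter
          (measurableSet_lt measurable_snd.fst measurable_fst))
    · exact Measurable.indicator (by fun_prop)
        ((measurableSet_lt measurable_const measurable_snd.snd).inter
          (measurableSet_lt measurable_snd.snd measurable_fst))
  -- slice functions
  set g : ℝ → ℝ → ENNReal := fun t => Set.indicator (Set.Ioo 0 t)
    (fun x => ENNReal.ofReal ((t - x) ^ (2 * H - 1))) with hg
  have hgm : ∀ t, Measurable (g t) := fun t =>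
    Measurable.indicator (by fun_prop) measurableSet_Ioo
  -- Step 1 : compare with the product majorant
  have step1 : (∫⁻ q in S,
      ENNReal.ofReal ‖Real.exp (-q.2.2 - q.2.1) * (q.1 - q.2.1) ^ (2 * H - 1) *
        (q.1 - q.2.2) ^ (2 * H - 1)‖) ≤ ∫⁻ q, c1 q * c2 q * c3 q := by
    rw [← lintegral_indicator hS]
    refine lintegral_mono fun q => ?_
    by_cases hq : q ∈ S
    · rw [Set.indicator_of_mem hq]
      obtain ⟨h1, h2, h3, h4, h5⟩ := hq
      have e1 : c1 q = ENNReal.ofReal (Real.exp (-q.1)) := by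
        rw [hc1]
        exact Set.indicator_of_mem (show q ∈ {q : ℝ × ℝ × ℝ | T < q.1} from h5) _
      have e2 : c2 q = ENNReal.ofReal ((q.1 - q.2.1) ^ (2 * H - 1)) := by
        rw [hc2]
        exact Set.indicator_of_mem
          (show q ∈ {q : ℝ × ℝ × ℝ | 0 < q.2.1 ∧ q.2.1 < q.1} from ⟨lt_trans h1 h2, h3⟩) _
      have e3 : c3 q = ENNReal.ofReal ((q.1 - q.2.2) ^ (2 * H - 1)) := by
        rw [hc3]
        exact Set.indicator_of_mem
          (show q ∈ {q : ℝ × ℝ × ℝ | 0 < q.2.2 ∧ q.2.2 < q.1} from ⟨h1, lt_trans h2 h3⟩) _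
      rw [e1, e2, e3]
      have hn1 : 0 ≤ Real.exp (-q.2.2 - q.2.1) := (Real.exp_pos _).le
      have hn2 : 0 ≤ (q.1 - q.2.1) ^ (2 * H - 1) := Real.rpow_nonneg (by linarith) _
      have hn3 : 0 ≤ (q.1 - q.2.2) ^ (2 * H - 1) := Real.rpow_nonneg (by linarith) _
      rw [Real.norm_eq_abs, abs_of_nonneg (mul_nonneg (mul_nonneg hn1 hn2) hn3),
        ENNReal.ofReal_mul (mul_nonneg hn1 hn2), ENNReal.ofReal_mul hn1]
      refine mul_le_mul_left (mul_le_mul_left (ENNReal.ofReal_le_ofReal ?_) _) _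
      exact Real.exp_le_exp.2 (by linarith)
    · rw [Set.indicator_of_notMem hq]
      exact zero_le
  -- Step 2 : Tonelli
  have inner_eq : ∀ t : ℝ, (∫⁻ y : ℝ × ℝ, c1 (t, y) * c2 (t, y) * c3 (t, y))
      = Set.indicator (Set.Ioi T) (fun s => ENNReal.ofReal (Real.exp (-s))) t *
        ((∫⁻ x, g t x) * (∫⁻ u, g t u)) := by
    intro t
    have e : ∀ y : ℝ × ℝ, c1 (t, y) * c2 (t, y) * c3 (t, y)
        = Set.indicator (Set.Ioi T) (fun s => ENNReal.ofReal (Real.exp (-s))) t *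
          (g t y.1 * g t y.2) := by
      intro y
      simp only [hc1, hc2, hc3, hg, Set.indicator_apply, Set.mem_setOf_eq, Set.mem_Ioo,
        Set.mem_Ioi]
      split_ifs <;> ring
    simp_rw [e]
    have hne : Set.indicator (Set.Ioi T) (fun s => ENNReal.ofReal (Real.exp (-s))) t ≠ ⊤ := by
      by_cases ht : t ∈ Set.Ioi T
      · simp [Set.indicator_of_mem ht]
      · simp [Set.indicator_of_notMem ht]
    rw [lintegral_const_mul' _ _ hne]
    congr 1
    rw [MeasureTheory.Measure.volume_eq_prod, lintegral_prod_mul (hgm t).aemeasurable (hgm t).aemeasurable]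
  have step2 : (∫⁻ q : ℝ × ℝ × ℝ, c1 q * c2 q * c3 q)
      ≤ ENNReal.ofReal (5 / (4 * H ^ 2) * T ^ (4 * H) * Real.exp (-T)) := by
    calc (∫⁻ q : ℝ × ℝ × ℝ, c1 q * c2 q * c3 q)
        = ∫⁻ t : ℝ, ∫⁻ y : ℝ × ℝ, c1 (t, y) * c2 (t, y) * c3 (t, y) := by
          rw [MeasureTheory.Measure.volume_eq_prod, lintegral_prod _ hm.aemeasurable]
      _ = ∫⁻ t : ℝ, Set.indicator (Set.Ioi T)
            (fun s => ENNReal.ofReal (Real.exp (-s)) * ((∫⁻ x, g s x) * (∫⁻ u, g s u))) t := by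
          refine lintegral_congr fun t => ?_
          rw [inner_eq t]
          by_cases ht : t ∈ Set.Ioi T
          · rw [Set.indicator_of_mem ht, Set.indicator_of_mem ht]
          · rw [Set.indicator_of_notMem ht, Set.indicator_of_notMem ht, zero_mul]
      _ = ∫⁻ t in Set.Ioi T, ENNReal.ofReal (Real.exp (-t)) * ((∫⁻ x, g t x) * (∫⁻ u, g t u)) := by
          rw [lintegral_indicator measurableSet_Ioi]
      _ ≤ ∫⁻ t in Set.Ioi T,
            ENNReal.ofReal (T ^ (4 * H) / (4 * H ^ 2) * ((1 + (t - T)) ^ 2 * Real.exp (-t))) := by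
          refine setLIntegral_mono' measurableSet_Ioi fun t ht => ?_
          have htT : T < t := ht
          have ht0 : 0 < t := by linarith
          have hgt : (∫⁻ x, g t x) = ENNReal.ofReal (t ^ (2 * H) / (2 * H)) := by
            rw [hg]
            simp only
            rw [lintegral_indicator measurableSet_Ioo, aux_inner hp1 ht0]
            norm_num
          rw [hgt]
          rw [← ENNReal.ofReal_mul (by positivity), ← ENNReal.ofReal_mul (by positivity)]
          refine ENNReal.ofReal_le_ofReal ?_
          have key : t ^ (2 * H) / (2 * H) * (t ^ (2 * H) / (2 * H))
              ≤ T ^ (4 * H) * (1 + (t - T)) ^ 2 / (4 * H ^ 2) := by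
            have h1 : t ^ (2 * H) * t ^ (2 * H) = t ^ (4 * H) := by
              rw [← Real.rpow_add ht0]; ring_nf
            have h2 : t ≤ T * (1 + (t - T)) := by nlinarith
            have h3 : t ^ (4 * H) ≤ (T * (1 + (t - T))) ^ (4 * H) :=
              Real.rpow_le_rpow ht0.le h2 (by positivity)
            have h4 : (T * (1 + (t - T))) ^ (4 * H)
                = T ^ (4 * H) * (1 + (t - T)) ^ (4 * H) :=
              Real.mul_rpow (by linarith) (by linarith)
            have h5 : (1 + (t - T)) ^ (4 * H) ≤ (1 + (t - T)) ^ (2 : ℝ) :=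
              Real.rpow_le_rpow_of_exponent_le (by linarith) (by linarith)
            have h6 : ((1 + (t - T)) : ℝ) ^ (2 : ℝ) = (1 + (t - T)) ^ 2 := Real.rpow_two _
            have hT4 : 0 ≤ T ^ (4 * H) := Real.rpow_nonneg (by linarith) _
            have hle : t ^ (2 * H) * t ^ (2 * H) ≤ T ^ (4 * H) * (1 + (t - T)) ^ 2 := by
              rw [h1]
              calc t ^ (4 * H) ≤ T ^ (4 * H) * (1 + (t - T)) ^ (4 * H) := h4 ▸ h3
                _ ≤ T ^ (4 * H) * (1 + (t - T)) ^ 2 := by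
                    rw [← h6]; exact mul_le_mul_of_nonneg_left h5 hT4
            have hH4 : (0:ℝ) < 4 * H ^ 2 := by positivity
            calc t ^ (2 * H) / (2 * H) * (t ^ (2 * H) / (2 * H))
                = t ^ (2 * H) * t ^ (2 * H) / (4 * H ^ 2) := by field_simp; ring
              _ ≤ T ^ (4 * H) * (1 + (t - T)) ^ 2 / (4 * H ^ 2) := by gcongr
          calc Real.exp (-t) * (t ^ (2 * H) / (2 * H) * (t ^ (2 * H) / (2 * H)))
              ≤ Real.exp (-t) * (T ^ (4 * H) * (1 + (t - T)) ^ 2 / (4 * H ^ 2)) :=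
                mul_le_mul_of_nonneg_left key (Real.exp_pos _).le
            _ = T ^ (4 * H) / (4 * H ^ 2) * ((1 + (t - T)) ^ 2 * Real.exp (-t)) := by ring
      _ = ENNReal.ofReal (T ^ (4 * H) / (4 * H ^ 2)) *
            ∫⁻ t in Set.Ioi T, ENNReal.ofReal ((1 + (t - T)) ^ 2 * Real.exp (-t)) := by
          simp_rw [ENNReal.ofReal_mul (by positivity : (0:ℝ) ≤ T ^ (4 * H) / (4 * H ^ 2))]
          rw [lintegral_const_mul' _ _ ENNReal.ofReal_ne_top]
      _ = ENNReal.ofReal (T ^ (4 * H) / (4 * H ^ 2)) * ENNReal.ofReal (5 * Real.exp (-T)) := by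
          rw [aux_outer]
      _ = ENNReal.ofReal (5 / (4 * H ^ 2) * T ^ (4 * H) * Real.exp (-T)) := by
          rw [← ENNReal.ofReal_mul (by positivity)]
          ring_nf
  exact le_trans step1 step2

theorem stmt_17 (H : ℝ) (hH : H ∈ Set.Ioo (0:ℝ) (1/2))
    (K1 : ℝ → ℝ)
    (hK1 : ∀ T : ℝ, K1 T =
      ∫ p in {p : ℝ × ℝ × ℝ | 0 < p.2.2 ∧ p.2.2 < p.2.1 ∧ p.2.1 < p.1 ∧
          p.1 ≤ p.2.1 + p.2.2 ∧ T < p.1},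
        Real.exp (-p.2.2 - p.2.1) * (p.1 - p.2.1) ^ (2 * H - 1) *
          (p.1 - p.2.2) ^ (2 * H - 1)) :
    ∃ c : ℝ, 0 < c ∧ ∀ T : ℝ, 1 ≤ T → K1 T ≤ c * T ^ (4 * H) * Real.exp (-T) := by
  obtain ⟨hH0, hH2⟩ := hH
  refine ⟨5 / (4 * H ^ 2), by positivity, fun T hT => ?_⟩
  have hbound : (0:ℝ) ≤ 5 / (4 * H ^ 2) * T ^ (4 * H) * Real.exp (-T) := by
    have : (0:ℝ) ≤ T ^ (4 * H) := Real.rpow_nonneg (by linarith) _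
    positivity
  rw [hK1 T]
  refine le_trans (le_abs_self _) ?_
  rw [← Real.norm_eq_abs]
  refine le_trans (norm_integral_le_lintegral_norm _) ?_
  refine ENNReal.toReal_le_of_le_ofReal hbound ?_
  exact aux_main hH0 hH2 hT
end
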